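/- Let g : [0,T] → ℝ be continuous and let K, K' : [0,T] → ℝ be continuous non-decreasing functions with K(0) = K'(0) = 0. Assume: (i) g(t) + K(T) − K(t) ≥ 0 and g(t) + K'(T) − K'(t) ≥ 0 for all t; (ii) ∫₀ᵀ (g(t) + K(T) − K(t)) dK(t) = 0 (K is 'flat'). Then K(T) − K(t) ≤ K'(T) − K'(t) for all t ∈ [0,T]. -/

import Mathlib

open MeasureTheory Set

/-- Minimality: a flat compensator yields the pointwise smallest remaining push
`K(T) − K(t)` among all admissible deterministic compensators. -/
theorem flat_compensator_minimal (T : ℝ) (hT : 0 < T)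
    (g : ℝ → ℝ) (hg : Continuous g)
    (K : StieltjesFunction ℝ) (hKc : Continuous ⇑K) (hK0 : K 0 = 0)
    (K' : ℝ → ℝ) (hK'c : ContinuousOn K' (Icc 0 T))
    (hK'mono : MonotoneOn K' (Icc 0 T)) (hK'0 : K' 0 = 0)
    (hpos : ∀ t ∈ Icc 0 T, 0 ≤ g t + K T - K t)
    (hpos' : ∀ t ∈ Icc 0 T, 0 ≤ g t + K' T - K' t)
    (hflat : (∫ t in Icc 0 T, (g t + K T - K t) ∂K.measure) = 0) :
    ∀ t ∈ Icc 0 T, K T - K t ≤ K' T - K' t := by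
  set f : ℝ → ℝ := fun t => g t + K T - K t with hf
  have hfc : Continuous f := (hg.add continuous_const).sub hKc
  have hint : IntegrableOn f (Icc 0 T) K.measure := hfc.integrableOn_Icc
  have hnn : 0 ≤ᵐ[K.measure.restrict (Icc 0 T)] f := by
    filter_upwards [ae_restrict_mem measurableSet_Icc] with t ht
    exact hpos t ht
  have hae : f =ᵐ[K.measure.restrict (Icc 0 T)] 0 :=
    (setIntegral_eq_zero_iff_of_nonneg_ae hnn hint).1 hflat
  -- define h
  intro t₁ ht₁
  by_contra hcon
  push_neg at hcon
  have ht₁T : t₁ < T := by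
    rcases lt_or_eq_of_le ht₁.2 with h | h
    · exact h
    · subst h; simp at hcon
  -- the set where h ≤ 0
  set h : ℝ → ℝ := fun t => (K T - K t) - (K' T - K' t) with hh
  have hhT : h T = 0 := by simp [hh]
  have hht₁ : 0 < h t₁ := by simp [hh]; linarith
  have hhc : ContinuousOn h (Icc 0 T) :=
    ((continuousOn_const.sub hKc.continuousOn).sub
      (continuousOn_const.sub hK'c))
  set S : Set ℝ := {t ∈ Icc t₁ T | h t ≤ 0} with hS
  have hTS : T ∈ S := ⟨⟨le_of_lt ht₁T, le_refl T⟩, le_of_eq hhT⟩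
  have hSne : S.Nonempty := ⟨T, hTS⟩
  have hSbdd : BddBelow S := ⟨t₁, fun x hx => hx.1.1⟩
  set t₂ : ℝ := sInf S with ht₂def
  have ht₂mem' : t₂ ∈ Icc t₁ T := ⟨le_csInf hSne (fun x hx => hx.1.1),
    csInf_le hSbdd hTS⟩
  have ht₂Icc : t₂ ∈ Icc 0 T := ⟨le_trans ht₁.1 ht₂mem'.1, ht₂mem'.2⟩
  -- S is closed, hence t₂ ∈ S
  have hSclosed : IsClosed S := by
    have hc2 : ContinuousOn h (Icc t₁ T) := hhc.mono (Icc_subset_Icc ht₁.1 le_rfl)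
    have hcl := hc2.preimage_isClosed_of_isClosed isClosed_Icc
      (isClosed_Iic (a := (0:ℝ)))
    exact hcl
  have ht₂S : t₂ ∈ S := hSclosed.csInf_mem hSne hSbdd
  have ht₂pos : h t₂ ≤ 0 := ht₂S.2
  have ht₁t₂ : t₁ < t₂ := by
    rcases lt_or_eq_of_le ht₂mem'.1 with h | h
    · exact h
    · exfalso; rw [← h] at ht₂pos; linarith
  -- on [t₁, t₂), h > 0, hence f > 0
  have hfpos : ∀ t ∈ Ico t₁ t₂, 0 < f t := by
    intro t ht
    have htIcc : t ∈ Icc 0 T :=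
      ⟨le_trans ht₁.1 ht.1, le_trans (le_of_lt ht.2) ht₂Icc.2⟩
    have hnotS : t ∉ S := fun hmem => absurd (csInf_le hSbdd hmem) (not_le.2 ht.2)
    have hht : 0 < (K T - K t) - (K' T - K' t) := by
      by_contra hc
      exact hnotS ⟨⟨ht.1, htIcc.2⟩, le_of_not_gt hc⟩
    have h2 := hpos' t htIcc
    show 0 < g t + K T - K t
    linarith
  -- K.measure (Ico t₁ t₂) = 0
  have hmeas0 : K.measure (Ico t₁ t₂) = 0 := by
    have hsub : Ico t₁ t₂ ⊆ {x | ¬ f x = 0} ∩ Icc 0 T := by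
      intro x hx
      refine ⟨ne_of_gt (hfpos x hx), ?_⟩
      exact ⟨le_trans ht₁.1 hx.1, le_trans (le_of_lt hx.2) ht₂Icc.2⟩
    have h0 : K.measure.restrict (Icc 0 T) {x | ¬ f x = 0} = 0 := hae
    have : K.measure ({x | ¬ f x = 0} ∩ Icc 0 T) = 0 := by
      rwa [Measure.restrict_apply₀' measurableSet_Icc.nullMeasurableSet] at h0
    exact measure_mono_null hsub this
  -- hence K t₂ = K t₁
  have hKeq : K t₂ ≤ K t₁ := by
    have hll : Function.leftLim (⇑K) t₂ = K t₂ :=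
      K.mono.continuousWithinAt_Iio_iff_leftLim_eq.1 hKc.continuousWithinAt
    have hll1 : Function.leftLim (⇑K) t₁ = K t₁ :=
      K.mono.continuousWithinAt_Iio_iff_leftLim_eq.1 hKc.continuousWithinAt
    rw [K.measure_Ico, hll, hll1, ENNReal.ofReal_eq_zero] at hmeas0
    linarith
  -- contradiction
  have hmono : K' t₁ ≤ K' t₂ :=
    hK'mono ⟨ht₁.1, ht₁.2⟩ ht₂Icc (le_of_lt ht₁t₂)
  have : 0 < h t₂ := by
    have hKmono : K t₁ ≤ K t₂ := K.mono (le_of_lt ht₁t₂)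
    simp only [hh] at hht₁ ⊢
    linarith
  linarith
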